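/- arXiv:1701.06852 — 3 statements merged into one kernel-verified Lean document; each statement's English description precedes it below -/
import Mathlib

section
/- For every real x > 0, (1/√(2π)) ∫_x^∞ (v − x)² e^{−v²/2} dv ≤ ψ(x)/x, where ψ(x) = (1/√(2π)) e^{−x²/2}. -/
open MeasureTheory Filter Real

lemma exp_half_sq_eq (v : ℝ) : Real.exp (-v ^ 2 / 2) = Real.exp (-(1/2) * v ^ 2) := by
  ring_nf

lemma integrable_stmt7_aux (a b c : ℝ) :
    Integrable (fun v : ℝ => (a * v ^ 2 + b * v + c) * Real.exp (-v ^ 2 / 2)) := by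
  have hb : (0:ℝ) < 1/2 := by norm_num
  have h0 : Integrable (fun v : ℝ => Real.exp (-(1/2) * v ^ 2)) := integrable_exp_neg_mul_sq hb
  have h1 : Integrable (fun v : ℝ => v * Real.exp (-(1/2) * v ^ 2)) :=
    integrable_mul_exp_neg_mul_sq hb
  have h2 : Integrable (fun v : ℝ => v ^ 2 * Real.exp (-(1/2) * v ^ 2)) := by
    have := integrable_rpow_mul_exp_neg_mul_sq hb (by norm_num : (-1:ℝ) < 2)
    have heq : ∀ v : ℝ, v ^ (2:ℝ) = v ^ 2 := fun v => by
      rw [show (2:ℝ) = ((2:ℕ):ℝ) by norm_num, Real.rpow_natCast]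
    simpa [heq] using this
  have : (fun v : ℝ => (a * v ^ 2 + b * v + c) * Real.exp (-v ^ 2 / 2)) =
      fun v : ℝ => a * (v ^ 2 * Real.exp (-(1/2) * v ^ 2)) +
        b * (v * Real.exp (-(1/2) * v ^ 2)) + c * Real.exp (-(1/2) * v ^ 2) := by
    funext v; rw [exp_half_sq_eq]; ring
  rw [this]
  exact (((h2.const_mul a).add (h1.const_mul b)).add (h0.const_mul c))

lemma tendsto_exp_neg_half_sq : Tendsto (fun v : ℝ => Real.exp (-v ^ 2 / 2)) atTop (nhds 0) := by
  apply Real.tendsto_exp_atBot.comp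
  have h : Tendsto (fun v : ℝ => v ^ 2 / 2) atTop atTop :=
    (tendsto_pow_atTop (two_ne_zero)).atTop_div_const (by norm_num)
  have := tendsto_neg_atTop_atBot.comp h
  exact this.congr (fun v => by simp [Function.comp, neg_div])

lemma tendsto_mul_exp_neg_half_sq :
    Tendsto (fun v : ℝ => v * Real.exp (-v ^ 2 / 2)) atTop (nhds 0) := by
  apply squeeze_zero' (g := fun v : ℝ => v * Real.exp (-v))
  · filter_upwards [eventually_ge_atTop (0:ℝ)] with v hv
    positivity
  · filter_upwards [eventually_ge_atTop (2:ℝ)] with v hv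
    have h1 : v ≤ v ^ 2 / 2 := by nlinarith
    have h2 : Real.exp (-v ^ 2 / 2) ≤ Real.exp (-v) := by
      apply Real.exp_le_exp.2; rw [neg_div]; linarith
    have hv0 : (0:ℝ) ≤ v := by linarith
    exact mul_le_mul_of_nonneg_left h2 hv0
  · simpa using tendsto_pow_mul_exp_neg_atTop_nhds_zero 1

theorem stmt_7 (x : ℝ) (hx : 0 < x) :
    (1 / Real.sqrt (2 * Real.pi)) * ∫ v in Set.Ioi x, (v - x) ^ 2 * Real.exp (-v ^ 2 / 2) ≤
      ((1 / Real.sqrt (2 * Real.pi)) * Real.exp (-x ^ 2 / 2)) / x := by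
  set c := 1 / Real.sqrt (2 * Real.pi) with hc
  have hc0 : 0 ≤ c := by positivity
  set f : ℝ → ℝ := fun v => (v - x) ^ 2 * Real.exp (-v ^ 2 / 2) with hfdef
  set g : ℝ → ℝ := fun v => (v * (v - x + 1/x) - 1) * Real.exp (-v ^ 2 / 2) with hgdef
  set F : ℝ → ℝ := fun v => (v - x + 1/x) * Real.exp (-v ^ 2 / 2) with hFdef
  have hfInt : Integrable f := by
    have := integrable_stmt7_aux 1 (-2*x) (x^2)
    apply this.congr
    filter_upwards with v
    simp only [hfdef]; ring
  have hgInt : Integrable g := by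
    have := integrable_stmt7_aux 1 (-x + 1/x) (-1)
    apply this.congr
    filter_upwards with v
    simp only [hgdef]; ring
  -- derivative of F
  have hexp : ∀ v : ℝ, HasDerivAt (fun v : ℝ => Real.exp (-v ^ 2 / 2))
      (-v * Real.exp (-v ^ 2 / 2)) v := by
    intro v
    have h1 : HasDerivAt (fun v : ℝ => -v ^ 2 / 2) (-v) v := by
      have := ((hasDerivAt_pow 2 v).neg).div_const 2
      refine this.congr_deriv ?_
      push_cast
      ring
    have := h1.exp
    convert this using 1
    ring
  have hderiv : ∀ v ∈ Set.Ioi x, HasDerivAt F (-(g v)) v := by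
    intro v _
    have h1 : HasDerivAt (fun v : ℝ => v - x + 1/x) 1 v := by
      simpa using ((hasDerivAt_id v).sub_const x).add_const (1/x)
    have := h1.mul (hexp v)
    refine this.congr_deriv ?_
    simp only [hgdef]; ring
  have hFcont : ContinuousWithinAt F (Set.Ici x) x := by
    apply Continuous.continuousWithinAt
    fun_prop
  have hF0 : Tendsto F atTop (nhds 0) := by
    have h1 := tendsto_mul_exp_neg_half_sq
    have h2 := tendsto_exp_neg_half_sq.const_mul (1/x - x)
    have h3 := h1.add h2
    simp only [mul_zero, add_zero] at h3
    apply h3.congr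
    intro v
    simp only [hFdef]; ring
  have hIg : ∫ v in Set.Ioi x, g v = F x := by
    have := integral_Ioi_of_hasDerivAt_of_tendsto hFcont hderiv
      (hgInt.neg.integrableOn) hF0
    rw [integral_neg] at this
    linarith
  have hmono : ∫ v in Set.Ioi x, f v ≤ ∫ v in Set.Ioi x, g v := by
    apply setIntegral_mono_on hfInt.integrableOn hgInt.integrableOn measurableSet_Ioi
    intro v hv
    rw [Set.mem_Ioi] at hv
    simp only [hfdef, hgdef]
    apply mul_le_mul_of_nonneg_right _ (Real.exp_nonneg _)
    have hvx : 0 ≤ v - x := by linarith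
    have h1 : (v - x) / x ≥ 0 := div_nonneg hvx hx.le
    have h2 : v / x - 1 = (v - x) / x := by field_simp
    have h3 : v * (1/x) = v / x := by ring
    nlinarith [mul_nonneg hx.le hvx, h1, h2, h3]
  have hFx : F x = Real.exp (-x ^ 2 / 2) / x := by
    simp only [hFdef]
    field_simp
    ring
  calc c * ∫ v in Set.Ioi x, f v ≤ c * ∫ v in Set.Ioi x, g v :=
        mul_le_mul_of_nonneg_left hmono hc0
    _ = c * F x := by rw [hIg]
    _ = (c * Real.exp (-x ^ 2 / 2)) / x := by rw [hFx]; ring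
end

section
/- Let z ∈ ℝⁿ, let w_1, …, w_n > 0, fix x ∈ ℝⁿ with s = |{i : x_i ≠ z_i}|, let τ > 0, and let C = {u ∈ ℝⁿ : u_i = τ w_i sign(x_i − z_i) for i with x_i ≠ z_i, and |u_i| ≤ τ w_i for i with x_i = z_i}. If 𝗀 is a standard Gaussian random vector in ℝⁿ (i.i.d. N(0,1) coordinates), then E_𝗀[dist²(𝗀, C)] ≤ s + τ² ∑_{i : x_i ≠ z_i} w_i² + 2 ∑_{i : x_i = z_i} ψ(τ w_i)/(τ w_i), where ψ(t) = (1/√(2π)) e^{−t²/2} and dist(a, C) = inf_{u ∈ C} ‖a − u‖₂. -/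
open MeasureTheory Real Filter Set ProbabilityTheory
open scoped ENNReal NNReal

namespace Stmt10Aux

lemma tendsto_gauss : Tendsto (fun t : ℝ => exp (-t^2/2)) atTop (nhds 0) := by
  have h : Tendsto (fun t : ℝ => (-1/2) * t^2) atTop atBot :=
    (tendsto_pow_atTop (two_ne_zero)).const_mul_atTop_of_neg (by norm_num)
  have := tendsto_exp_atBot.comp h
  refine this.congr fun t => ?_
  simp only [Function.comp]
  ring_nf

lemma tendsto_mul_gauss : Tendsto (fun t : ℝ => t * exp (-t^2/2)) atTop (nhds 0) := by
  have hb : Tendsto (fun t : ℝ => t * exp (-t)) atTop (nhds 0) := by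
    simpa using tendsto_pow_mul_exp_neg_atTop_nhds_zero 1
  refine squeeze_zero' ?_ ?_ hb
  · filter_upwards [eventually_ge_atTop (0:ℝ)] with t ht
    positivity
  · filter_upwards [eventually_ge_atTop (2:ℝ)] with t ht
    have h1 : -t^2/2 ≤ -t := by nlinarith
    have := exp_le_exp.mpr h1
    nlinarith [exp_pos (-t^2/2), exp_pos (-t), (by linarith : (0:ℝ) ≤ t)]

lemma hd_exp (t : ℝ) : HasDerivAt (fun t : ℝ => exp (-t^2/2)) (-t * exp (-t^2/2)) t := by
  have h : HasDerivAt (fun t : ℝ => -t^2/2) (-t) t := by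
    have h0 : HasDerivAt (fun t : ℝ => t^2) (2*t) t := by simpa using hasDerivAt_pow 2 t
    have := (h0.neg).div_const 2
    exact this.congr_deriv (by ring)
  simpa [mul_comm] using h.exp

lemma I0 : Integrable (fun t : ℝ => exp (-t^2/2)) := by
  have h := integrable_exp_neg_mul_sq (b := (1/2 : ℝ)) (by norm_num)
  refine h.congr (Eventually.of_forall fun t => ?_)
  ring_nf

lemma I1 : Integrable (fun t : ℝ => t * exp (-t^2/2)) := by
  have h := integrable_mul_exp_neg_mul_sq (b := (1/2 : ℝ)) (by norm_num)
  refine h.congr (Eventually.of_forall fun t => ?_)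
  ring_nf

lemma I2 : Integrable (fun t : ℝ => t^2 * exp (-t^2/2)) := by
  have h := integrable_rpow_mul_exp_neg_mul_sq (b := (1/2 : ℝ)) (by norm_num)
    (s := 2) (by norm_num)
  refine h.congr (Eventually.of_forall fun t => ?_)
  norm_num
  left; ring

lemma E0 : ∫ t : ℝ, exp (-t^2/2) = Real.sqrt (2*π) := by
  have h := integral_gaussian (1/2 : ℝ)
  rw [show π / (1/2 : ℝ) = 2*π by ring] at h
  rw [← h]
  congr 1 with t
  ring_nf

lemma E1 : ∫ t : ℝ, t * exp (-t^2/2) = 0 := by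
  have hderiv : ∀ t : ℝ, HasDerivAt (fun t : ℝ => -exp (-t^2/2)) (t * exp (-t^2/2)) t := by
    intro t
    have := (hd_exp t).neg
    simp only [neg_mul, neg_neg] at this
    exact this
  have hbot : Tendsto (fun t : ℝ => -exp (-t^2/2)) atBot (nhds 0) := by
    have := (tendsto_gauss.comp tendsto_neg_atBot_atTop).neg
    simp only [Function.comp, neg_sq, neg_zero] at this
    exact this
  have htop : Tendsto (fun t : ℝ => -exp (-t^2/2)) atTop (nhds 0) := by
    simpa using tendsto_gauss.neg
  simpa using integral_of_hasDerivAt_of_tendsto hderiv I1 hbot htop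

lemma E2 : ∫ t : ℝ, t^2 * exp (-t^2/2) = Real.sqrt (2*π) := by
  have hderiv : ∀ t : ℝ, HasDerivAt (fun t : ℝ => -(t * exp (-t^2/2)))
      ((t^2 - 1) * exp (-t^2/2)) t := by
    intro t
    have := ((hasDerivAt_id t).mul (hd_exp t)).neg
    exact this.congr_deriv (by simp only [id_eq]; ring)
  have hint : Integrable (fun t : ℝ => (t^2 - 1) * exp (-t^2/2)) :=
    (I2.sub I0).congr (Eventually.of_forall fun t => by simp only [Pi.sub_apply]; ring)
  have hbot : Tendsto (fun t : ℝ => -(t * exp (-t^2/2))) atBot (nhds 0) := by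
    have := tendsto_mul_gauss.comp tendsto_neg_atBot_atTop
    refine this.congr fun t => ?_
    simp [Function.comp, neg_sq]
  have htop : Tendsto (fun t : ℝ => -(t * exp (-t^2/2))) atTop (nhds 0) := by
    simpa using tendsto_mul_gauss.neg
  have key := integral_of_hasDerivAt_of_tendsto hderiv hint hbot htop
  have split : ∫ t : ℝ, (t^2 - 1) * exp (-t^2/2)
      = (∫ t : ℝ, t^2 * exp (-t^2/2)) - ∫ t : ℝ, exp (-t^2/2) := by
    rw [← integral_sub I2 I0]
    congr 1 with t
    ring
  rw [split] at key
  rw [← E0]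
  linarith [key]

lemma T1 {a : ℝ} : ∫ t in Ioi a, t * exp (-t^2/2) = exp (-a^2/2) := by
  have hderiv : ∀ t ∈ Ici a, HasDerivAt (fun t : ℝ => -exp (-t^2/2)) (t * exp (-t^2/2)) t := by
    intro t _
    have := (hd_exp t).neg
    simp only [neg_mul, neg_neg] at this
    exact this
  have htop : Tendsto (fun t : ℝ => -exp (-t^2/2)) atTop (nhds 0) := by
    simpa using tendsto_gauss.neg
  have := integral_Ioi_of_hasDerivAt_of_tendsto' hderiv I1.integrableOn htop
  simpa using this

lemma T2 {a : ℝ} :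
    ∫ t in Ioi a, (t * (t - a) - 1) * exp (-t^2/2) = 0 := by
  have hderiv : ∀ t ∈ Ici a, HasDerivAt (fun t : ℝ => -((t - a) * exp (-t^2/2)))
      ((t * (t - a) - 1) * exp (-t^2/2)) t := by
    intro t _
    have := (((hasDerivAt_id t).sub_const a).mul (hd_exp t)).neg
    exact this.congr_deriv (by simp only [id_eq]; ring)
  have hint : Integrable (fun t : ℝ => (t * (t - a) - 1) * exp (-t^2/2)) :=
    ((I2.sub (I1.const_mul a)).sub I0).congr (Eventually.of_forall fun t => by
      simp only [Pi.sub_apply]; ring)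
  have htop : Tendsto (fun t : ℝ => -((t - a) * exp (-t^2/2))) atTop (nhds 0) := by
    have h1 := tendsto_mul_gauss.neg.add (tendsto_gauss.const_mul a)
    rw [neg_zero, mul_zero, add_zero] at h1
    refine h1.congr fun t => ?_
    ring
  have := integral_Ioi_of_hasDerivAt_of_tendsto' hderiv hint.integrableOn htop
  simpa using this

lemma intSub2 (a : ℝ) : Integrable (fun t : ℝ => (t - a)^2 * exp (-t^2/2)) :=
  ((I2.sub ((I1.const_mul (2*a)))).add (I0.const_mul (a^2))).congr
    (Eventually.of_forall fun t => by simp only [Pi.sub_apply, Pi.add_apply]; ring)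

lemma intMul2 (a : ℝ) : Integrable (fun t : ℝ => t * (t - a) * exp (-t^2/2)) :=
  (I2.sub (I1.const_mul a)).congr
    (Eventually.of_forall fun t => by simp only [Pi.sub_apply]; ring)

lemma TB {a : ℝ} (ha : 0 < a) :
    ∫ t in Ioi a, (t - a)^2 * exp (-t^2/2) ≤ exp (-a^2/2) / a := by
  have step1 : ∫ t in Ioi a, (t - a)^2 * exp (-t^2/2)
      ≤ ∫ t in Ioi a, t * (t - a) * exp (-t^2/2) := by
    refine setIntegral_mono_on (intSub2 a).integrableOn (intMul2 a).integrableOn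
      measurableSet_Ioi ?_
    intro t ht
    have h1 : 0 ≤ t - a := by simp at ht; linarith
    have h2 : t - a ≤ t := by linarith
    have := mul_le_mul_of_nonneg_right (mul_le_mul_of_nonneg_right h2 h1) (exp_pos (-t^2/2)).le
    calc (t-a)^2 * exp (-t^2/2) = (t-a)*(t-a) * exp (-t^2/2) := by ring
    _ ≤ t * (t-a) * exp (-t^2/2) := this
  have step2 : ∫ t in Ioi a, t * (t - a) * exp (-t^2/2)
      = ∫ t in Ioi a, exp (-t^2/2) := by
    have h := T2 (a := a)
    have hsub : ∫ t in Ioi a, (t * (t - a) - 1) * exp (-t^2/2)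
        = (∫ t in Ioi a, t * (t - a) * exp (-t^2/2)) - ∫ t in Ioi a, exp (-t^2/2) := by
      rw [← integral_sub (intMul2 a).integrableOn I0.integrableOn]
      congr 1 with t
      ring
    rw [hsub] at h
    linarith
  have step3 : ∫ t in Ioi a, exp (-t^2/2) ≤ ∫ t in Ioi a, (t/a) * exp (-t^2/2) := by
    refine setIntegral_mono_on I0.integrableOn ?_ measurableSet_Ioi ?_
    · exact ((I1.const_mul (1/a)).congr (Eventually.of_forall fun t => by ring)).integrableOn
    · intro t ht
      simp only [mem_Ioi] at ht
      have h1 : 1 ≤ t / a := (one_le_div ha).2 ht.le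
      nlinarith [exp_pos (-t^2/2), mul_le_mul_of_nonneg_right h1 (exp_pos (-t^2/2)).le]
  have step4 : ∫ t in Ioi a, (t/a) * exp (-t^2/2) = exp (-a^2/2) / a := by
    have : ∫ t in Ioi a, (t/a) * exp (-t^2/2) = (1/a) * ∫ t in Ioi a, t * exp (-t^2/2) := by
      rw [← MeasureTheory.integral_const_mul]
      congr 1 with t
      ring
    rw [this, T1]
    ring
  linarith

lemma pdf_eq (t : ℝ) :
    gaussianPDFReal 0 1 t = (Real.sqrt (2*π))⁻¹ * exp (-t^2/2) := by
  simp [gaussianPDFReal]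

lemma G0 (f : ℝ → ℝ) :
    ∫ t, f t ∂(gaussianReal 0 1) = ∫ t, gaussianPDFReal 0 1 t * f t := by
  rw [gaussianReal_of_var_ne_zero 0 one_ne_zero]
  have hmeas : Measurable fun t => (gaussianPDFReal 0 1 t).toNNReal :=
    (measurable_gaussianPDFReal 0 1).real_toNNReal
  have : (gaussianPDF 0 1) = fun t => ((gaussianPDFReal 0 1 t).toNNReal : ℝ≥0∞) := rfl
  rw [this, integral_withDensity_eq_integral_smul hmeas]
  congr 1 with t
  rw [NNReal.smul_def, smul_eq_mul, Real.coe_toNNReal _ (gaussianPDFReal_nonneg 0 1 t)]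

lemma IV (c : ℝ) :
    Integrable (fun t : ℝ => gaussianPDFReal 0 1 t * (t - c)^2) := by
  have : Integrable (fun t : ℝ => (Real.sqrt (2*π))⁻¹ *
      ((t - c)^2 * exp (-t^2/2))) := (intSub2 c).const_mul _
  refine this.congr (Eventually.of_forall fun t => ?_)
  dsimp only
  rw [pdf_eq]; ring

lemma GInt (c : ℝ) : Integrable (fun t : ℝ => (t - c)^2) (gaussianReal 0 1) := by
  rw [gaussianReal_of_var_ne_zero 0 one_ne_zero]
  rw [integrable_withDensity_iff (measurable_gaussianPDF 0 1)
    (Eventually.of_forall fun t => ENNReal.ofReal_lt_top)]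
  refine (IV c).congr (Eventually.of_forall fun t => ?_)
  dsimp only [gaussianPDF]
  rw [ENNReal.toReal_ofReal (gaussianPDFReal_nonneg 0 1 t)]
  ring

lemma GD (c : ℝ) : ∫ t, (t - c)^2 ∂(gaussianReal 0 1) = 1 + c^2 := by
  rw [G0]
  have hK : Real.sqrt (2*π) ≠ 0 := by positivity
  have expand : (fun t : ℝ => gaussianPDFReal 0 1 t * (t - c)^2)
      = fun t : ℝ => (Real.sqrt (2*π))⁻¹ * (t^2 * exp (-t^2/2))
        - (2*c*(Real.sqrt (2*π))⁻¹) * (t * exp (-t^2/2))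
        + (c^2*(Real.sqrt (2*π))⁻¹) * exp (-t^2/2) := by
    funext t; rw [pdf_eq]; ring
  have hA : Integrable (fun t : ℝ => (Real.sqrt (2*π))⁻¹ * (t^2 * exp (-t^2/2))) :=
    I2.const_mul _
  have hB : Integrable (fun t : ℝ => (2*c*(Real.sqrt (2*π))⁻¹) * (t * exp (-t^2/2))) :=
    I1.const_mul _
  have hC : Integrable (fun t : ℝ => (c^2*(Real.sqrt (2*π))⁻¹) * exp (-t^2/2)) :=
    I0.const_mul _
  have hAB : Integrable (fun t : ℝ => (Real.sqrt (2*π))⁻¹ * (t^2 * exp (-t^2/2))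
      - (2*c*(Real.sqrt (2*π))⁻¹) * (t * exp (-t^2/2))) :=
    (hA.sub hB).congr (Eventually.of_forall fun t => by simp [Pi.sub_apply])
  rw [expand, integral_add hAB hC, integral_sub hA hB,
    integral_const_mul, integral_const_mul, integral_const_mul, E0, E1, E2]
  field_simp
  ring

lemma GC {a : ℝ} (ha : 0 < a) :
    ∫ t, max (|t| - a) 0 ^2 ∂(gaussianReal 0 1)
      ≤ 2 * ((Real.sqrt (2*π))⁻¹ * exp (-a^2/2) / a) := by
  rw [G0]
  set K := (Real.sqrt (2*π))⁻¹ with hKdef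
  have hK : 0 < K := by positivity
  -- plus and minus parts
  have hIp : Integrable (fun t : ℝ => gaussianPDFReal 0 1 t * max (t - a) 0 ^2) := by
    refine (IV a).mono' ?_ (Eventually.of_forall fun t => ?_)
    · refine ((measurable_gaussianPDFReal 0 1).mul ?_).aestronglyMeasurable
      exact (((measurable_id.sub_const a).max measurable_const).pow_const 2)
    · have h1 : max (t - a) 0 ^2 ≤ (t - a)^2 := by
        rcases le_total (t - a) 0 with h | h
        · rw [max_eq_right h]; simpa using sq_nonneg (t - a)
        · rw [max_eq_left h]
      have h0 := gaussianPDFReal_nonneg 0 1 t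
      rw [Real.norm_eq_abs, abs_of_nonneg (mul_nonneg h0 (sq_nonneg _))]
      exact mul_le_mul_of_nonneg_left h1 h0
  have hIm : Integrable (fun t : ℝ => gaussianPDFReal 0 1 t * max (-t - a) 0 ^2) := by
    refine (IV (-a)).mono' ?_ (Eventually.of_forall fun t => ?_)
    · refine ((measurable_gaussianPDFReal 0 1).mul ?_).aestronglyMeasurable
      exact ((measurable_id.neg.sub_const a).max measurable_const).pow_const 2
    · have h1 : max (-t - a) 0 ^2 ≤ (t - -a)^2 := by
        rcases le_total (-t - a) 0 with h | h
        · rw [max_eq_right h]; simpa using sq_nonneg (t - -a)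
        · rw [max_eq_left h]; nlinarith
      have h0 := gaussianPDFReal_nonneg 0 1 t
      rw [Real.norm_eq_abs, abs_of_nonneg (mul_nonneg h0 (sq_nonneg _))]
      exact mul_le_mul_of_nonneg_left h1 h0
  have hsplit : ∫ t, gaussianPDFReal 0 1 t * max (|t| - a) 0 ^2
      ≤ (∫ t, gaussianPDFReal 0 1 t * max (t - a) 0 ^2)
        + ∫ t, gaussianPDFReal 0 1 t * max (-t - a) 0 ^2 := by
    rw [← integral_add hIp hIm]
    refine integral_mono_of_nonneg (Eventually.of_forall fun t => ?_) (hIp.add hIm)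
      (Eventually.of_forall fun t => ?_)
    · have := gaussianPDFReal_nonneg 0 1 t
      positivity
    · have h0 := gaussianPDFReal_nonneg 0 1 t
      have hcase : max (|t| - a) 0 ^2 ≤ max (t - a) 0 ^2 + max (-t - a) 0 ^2 := by
        rcases le_total 0 t with h | h
        · rw [abs_of_nonneg h]; nlinarith [sq_nonneg (max (-t - a) 0)]
        · rw [abs_of_nonpos h]; nlinarith [sq_nonneg (max (t - a) 0)]
      calc gaussianPDFReal 0 1 t * max (|t| - a) 0 ^2
          ≤ gaussianPDFReal 0 1 t * (max (t - a) 0 ^2 + max (-t - a) 0 ^2) :=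
            mul_le_mul_of_nonneg_left hcase h0
        _ = _ := by ring
  -- minus part equals plus part by reflection
  have hrefl : ∫ t, gaussianPDFReal 0 1 t * max (-t - a) 0 ^2
      = ∫ t, gaussianPDFReal 0 1 t * max (t - a) 0 ^2 := by
    rw [← MeasureTheory.integral_neg_eq_self (fun t => gaussianPDFReal 0 1 t * max (t - a) 0 ^2) volume]
    congr 1 with t
    rw [pdf_eq, pdf_eq, neg_sq]
  -- plus part as a set integral
  have hplus : ∫ t, gaussianPDFReal 0 1 t * max (t - a) 0 ^2
      ≤ K * (exp (-a^2/2) / a) := by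
    have hvan : ∀ t ∉ Ioi a, gaussianPDFReal 0 1 t * max (t - a) 0 ^2 = 0 := by
      intro t ht
      simp only [mem_Ioi, not_lt] at ht
      rw [max_eq_right (by linarith)]
      simp
    rw [← setIntegral_eq_integral_of_forall_compl_eq_zero hvan]
    have hcongr : ∫ t in Ioi a, gaussianPDFReal 0 1 t * max (t - a) 0 ^2
        = K * ∫ t in Ioi a, (t - a)^2 * exp (-t^2/2) := by
      rw [← MeasureTheory.integral_const_mul]
      refine setIntegral_congr_fun measurableSet_Ioi fun t ht => ?_
      simp only [mem_Ioi] at ht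
      rw [pdf_eq, max_eq_left (by linarith)]
      ring
    rw [hcongr]
    exact mul_le_mul_of_nonneg_left (TB ha) hK.le
  calc ∫ t, gaussianPDFReal 0 1 t * max (|t| - a) 0 ^2
      ≤ _ + _ := hsplit
    _ = 2 * ∫ t, gaussianPDFReal 0 1 t * max (t - a) 0 ^2 := by rw [hrefl]; ring
    _ ≤ 2 * (K * exp (-a^2/2) / a) := by rw [mul_div_assoc]; linarith [hplus]

lemma mp_eval {ι : Type*} [Fintype ι] {α : ι → Type*} [∀ i, MeasurableSpace (α i)]
    (μ : ∀ i, Measure (α i)) [∀ i, IsProbabilityMeasure (μ i)] (i : ι) :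
    MeasurePreserving (Function.eval i) (Measure.pi μ) (μ i) := by
  refine ⟨measurable_pi_apply i, ?_⟩
  ext s hs
  rw [Measure.map_apply (measurable_pi_apply i) hs]
  classical
  rw [show Function.eval i ⁻¹' s = Set.pi Set.univ (Function.update (fun j => Set.univ) i s)
    from Set.eval_preimage, Measure.pi_pi]
  rw [Finset.prod_eq_single i (fun j _ hj => by
    rw [Function.update_of_ne hj]; exact measure_univ) (by simp)]
  rw [Function.update_self]


end Stmt10Aux

open MeasureTheory ProbabilityTheory in
theorem stmt_10 (n : ℕ) (z : EuclideanSpace ℝ (Fin n)) (w : Fin n → ℝ) (hw : ∀ i, 0 < w i)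
    (x : EuclideanSpace ℝ (Fin n)) (s : ℕ)
    (hs : s = (Finset.univ.filter fun i => x i ≠ z i).card)
    (τ : ℝ) (hτ : 0 < τ)
    (C : Set (EuclideanSpace ℝ (Fin n)))
    (hC : C = {u : EuclideanSpace ℝ (Fin n) |
      (∀ i, x i ≠ z i → u i = τ * w i * Real.sign (x i - z i)) ∧
        ∀ i, x i = z i → |u i| ≤ τ * w i}) :
    ∫ gv : Fin n → ℝ,
        Metric.infDist ((EuclideanSpace.equiv (Fin n) ℝ).symm gv) C ^ 2
        ∂(Measure.pi fun _ => gaussianReal 0 1) ≤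
      (s : ℝ) + τ ^ 2 * (∑ i ∈ Finset.univ.filter fun i => x i ≠ z i, w i ^ 2) +
        2 * ∑ i ∈ Finset.univ.filter fun i => x i = z i,
          (1 / Real.sqrt (2 * Real.pi)) * Real.exp (-(τ * w i) ^ 2 / 2) / (τ * w i) := by
  classical
  set γ := gaussianReal 0 1 with hγ
  set μ := Measure.pi fun _ : Fin n => γ with hμ
  have ha : ∀ i, 0 < τ * w i := fun i => mul_pos hτ (hw i)
  set d : Fin n → ℝ → ℝ := fun i t =>
    if x i = z i then max (|t| - τ * w i) 0 ^2
    else (t - τ * w i * Real.sign (x i - z i))^2 with hd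
  have hmeas_d : ∀ i, Measurable (d i) := by
    intro i
    simp only [hd]
    split_ifs with h
    · exact ((measurable_id.abs.sub_const _).max measurable_const).pow_const 2
    · exact (measurable_id.sub_const _).pow_const 2
  have hdint : ∀ i, Integrable (d i) γ := by
    intro i
    simp only [hd]
    split_ifs with h
    · refine (Stmt10Aux.GInt 0).mono'
        ((((measurable_id.abs.sub_const (τ * w i)).max measurable_const).pow_const 2
          ).aestronglyMeasurable)
        (Filter.Eventually.of_forall fun t => ?_)
      have h1 : max (|t| - τ * w i) 0 ≤ |t| :=
          max_le (sub_le_self _ (ha i).le) (abs_nonneg t)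
      have h2 : (0:ℝ) ≤ max (|t| - τ * w i) 0 := le_max_right _ _
      rw [Real.norm_eq_abs, abs_of_nonneg (sq_nonneg _)]
      calc max (|t| - τ * w i) 0 ^2 ≤ |t|^2 := by nlinarith
        _ = (t - 0)^2 := by rw [sub_zero, sq_abs]
    · exact Stmt10Aux.GInt _
  -- integrability over the product measure
  have hmp : ∀ i : Fin n, MeasurePreserving (Function.eval i) μ γ := fun i =>
    Stmt10Aux.mp_eval (fun _ : Fin n => γ) i
  have hmap : ∀ i : Fin n, μ.map (Function.eval i) = γ := fun i => (hmp i).map_eq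
  have hdint' : ∀ i, Integrable (fun gv : Fin n → ℝ => d i (gv i)) μ := by
    intro i
    have := (integrable_map_measure
      (f := Function.eval i) (g := d i)
      (by rw [hmap i]; exact (hmeas_d i).aestronglyMeasurable)
      (measurable_pi_apply i).aemeasurable).mp (by rw [hmap i]; exact hdint i)
    exact this
  have hIsum : Integrable (fun gv : Fin n → ℝ => ∑ i, d i (gv i)) μ :=
    integrable_finset_sum _ fun i _ => hdint' i
  -- the projection point
  have key : ∀ gv : Fin n → ℝ,
      Metric.infDist ((EuclideanSpace.equiv (Fin n) ℝ).symm gv) C ^ 2 ≤ ∑ i, d i (gv i) := by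
    intro gv
    set u : EuclideanSpace ℝ (Fin n) := (EuclideanSpace.equiv (Fin n) ℝ).symm (fun i =>
      if x i = z i then max (-(τ * w i)) (min (τ * w i) (gv i))
      else τ * w i * Real.sign (x i - z i)) with hu
    have huapp : ∀ i, u i = if x i = z i then max (-(τ * w i)) (min (τ * w i) (gv i))
      else τ * w i * Real.sign (x i - z i) := fun i => rfl
    have humem : u ∈ C := by
      rw [hC]
      refine ⟨fun i hi => ?_, fun i hi => ?_⟩
      · rw [huapp i, if_neg hi]
      · rw [huapp i, if_pos hi]
        rw [abs_le]
        constructor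
        · exact le_max_left _ _
        · exact max_le (by linarith [ha i]) (min_le_left _ _)
    have h1 : Metric.infDist ((EuclideanSpace.equiv (Fin n) ℝ).symm gv) C
        ≤ dist ((EuclideanSpace.equiv (Fin n) ℝ).symm gv) u :=
      Metric.infDist_le_dist_of_mem humem
    have h2 : Metric.infDist ((EuclideanSpace.equiv (Fin n) ℝ).symm gv) C ^ 2
        ≤ dist ((EuclideanSpace.equiv (Fin n) ℝ).symm gv) u ^ 2 :=
      pow_le_pow_left₀ Metric.infDist_nonneg h1 2
    refine h2.trans ?_
    rw [EuclideanSpace.dist_eq, Real.sq_sqrt (by positivity)]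
    refine Finset.sum_le_sum fun i _ => ?_
    have hgv : ((EuclideanSpace.equiv (Fin n) ℝ).symm gv) i = gv i := rfl
    rw [hgv, huapp i, Real.dist_eq, sq_abs]
    by_cases hi : x i = z i
    · rw [if_pos hi]; simp only [hd]
      simp only [if_pos hi]
      set a := τ * w i
      have ha' : 0 < a := ha i
      set t := gv i
      rcases le_total t a with h1' | h1'
      · rw [min_eq_right h1']
        rcases le_total (-a) t with h2' | h2'
        · rw [max_eq_right h2', sub_self]
          have : (0:ℝ) ≤ max (|t| - a) 0 := le_max_right _ _
          simpa using sq_nonneg (max (|t| - a) 0)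
        · rw [max_eq_left h2']
          have habs : |t| = -t := abs_of_nonpos (by linarith)
          rw [max_eq_left (by rw [habs]; linarith)]
          rw [habs]
          ring_nf
          exact le_refl _
      · rw [min_eq_left h1', max_eq_right (by linarith : -a ≤ a)]
        have habs : |t| = t := abs_of_nonneg (by linarith)
        rw [max_eq_left (by rw [habs]; linarith), habs]
    · rw [if_neg hi]; simp only [hd]
      simp only [if_neg hi]
      exact le_refl _
  -- integrate
  have step1 : ∫ gv : Fin n → ℝ,
      Metric.infDist ((EuclideanSpace.equiv (Fin n) ℝ).symm gv) C ^ 2 ∂μ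
      ≤ ∫ gv : Fin n → ℝ, ∑ i, d i (gv i) ∂μ :=
    integral_mono_of_nonneg (Filter.Eventually.of_forall fun gv => sq_nonneg _)
      hIsum (Filter.Eventually.of_forall key)
  have step2 : ∫ gv : Fin n → ℝ, ∑ i, d i (gv i) ∂μ = ∑ i, ∫ t, d i t ∂γ := by
    rw [integral_finset_sum _ fun i _ => hdint' i]
    refine Finset.sum_congr rfl fun i _ => ?_
    rw [← hmap i, integral_map (measurable_pi_apply i).aemeasurable
      (by rw [hmap i]; exact (hmeas_d i).aestronglyMeasurable)]
  -- evaluate / bound the coordinate integrals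
  have hS : ∀ i ∈ Finset.univ.filter (fun i => ¬ x i = z i),
      ∫ t, d i t ∂γ = 1 + τ^2 * w i ^2 := by
    intro i hi
    simp only [Finset.mem_filter] at hi
    simp only [hd]
    simp only [if_neg hi.2]
    rw [Stmt10Aux.GD]
    have hsgn : Real.sign (x i - z i) ^ 2 = 1 := by
      rcases lt_trichotomy (x i - z i) 0 with h | h | h
      · rw [Real.sign_of_neg h]; norm_num
      · exact absurd (by linarith : x i = z i) hi.2
      · rw [Real.sign_of_pos h]; norm_num
    have : (τ * w i * Real.sign (x i - z i))^2 = τ^2 * w i^2 := by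
      rw [mul_pow, mul_pow, hsgn, mul_one]
    rw [this]
  have hT : ∀ i ∈ Finset.univ.filter (fun i => x i = z i),
      ∫ t, d i t ∂γ ≤ 2 * ((1 / Real.sqrt (2 * π)) * exp (-(τ * w i) ^ 2 / 2) / (τ * w i)) := by
    intro i hi
    simp only [Finset.mem_filter] at hi
    simp only [hd]
    simp only [if_pos hi.2]
    have := Stmt10Aux.GC (ha i)
    rw [one_div]
    convert this using 4
  -- assemble
  rw [hμ] at step1 step2 ⊢
  refine (step1.trans_eq step2).trans ?_
  rw [← Finset.sum_filter_add_sum_filter_not Finset.univ (fun i => x i = z i)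
    (fun i => ∫ t, d i t ∂γ)]
  have hsum1 : ∑ i ∈ Finset.univ.filter (fun i => ¬ x i = z i), ∫ t, d i t ∂γ
      = (s : ℝ) + τ^2 * ∑ i ∈ Finset.univ.filter (fun i => ¬ x i = z i), w i ^2 := by
    rw [Finset.sum_congr rfl hS, Finset.sum_add_distrib, Finset.sum_const, ← Finset.mul_sum]
    simp only [nsmul_eq_mul, mul_one]
    congr 1
    rw [hs]
  have hsum2 : ∑ i ∈ Finset.univ.filter (fun i => x i = z i), ∫ t, d i t ∂γ
      ≤ 2 * ∑ i ∈ Finset.univ.filter (fun i => x i = z i),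
        (1 / Real.sqrt (2 * π)) * exp (-(τ * w i) ^ 2 / 2) / (τ * w i) := by
    rw [Finset.mul_sum]
    exact Finset.sum_le_sum hT
  have hfilter : (Finset.univ.filter fun i => x i ≠ z i)
      = Finset.univ.filter (fun i => ¬ x i = z i) := rfl
  rw [hfilter]
  linarith [hsum1, hsum2]
end

section
/- Let x, z_0 = 0, z_1, …, z_J ∈ ℝⁿ, ε > 0, and for each j ∈ {0,…,J} define η_j = n (∑_{l=1}^n 1/(|x_l − z_{jl}| + ε))⁻¹ and weights w_{ji} = η_j/(|x_i − z_{ji}| + ε). Let β_j ≥ 0 with ∑_{j=0}^J β_j = 1, s_j = |{i : x_i ≠ z_{ji}}|, s̄ = ∑_{j=0}^J β_j s_j, η̂ = min_j η_j, and α = (ε²/η̂²) ∑_{j=0}^J β_j ∑_{i : x_i ≠ z_{ji}} w_{ji}². Assume 0 < s̄ < n. Let g(x') = ∑_{j=0}^J β_j ∑_{i=1}^n w_{ji} |x'_i − z_{ji}| with subdifferential ∂g(x) = {u : g(y) ≥ g(x) + ⟨u, y − x⟩ for all y}. Then, for a standard Gaussian vector 𝗀 in ℝⁿ, inf_{τ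 ≥ 0} E_𝗀[dist²(𝗀, τ·∂g(x))] ≤ s̄ + 2α log(n/s̄) + s̄ (1 − s̄/n)/√(π log(n/s̄)), where dist(a, C) = inf_{u ∈ C} ‖a − u‖₂ and τ·C = {τ u : u ∈ C}. -/
section AuxStmt12
open MeasureTheory Real Filter Set Asymptotics ProbabilityTheory
open scoped ENNReal NNReal

lemma aux_exp_deriv (t : ℝ) :
    HasDerivAt (fun t : ℝ => Real.exp (-t^2/2)) (-t * Real.exp (-t^2/2)) t := by
  have h : HasDerivAt (fun t : ℝ => -t^2/2) (-t) t := by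
    have := (hasDerivAt_pow 2 t).neg.div_const 2
    refine this.congr_deriv ?_ ; ring
  simpa [mul_comm] using h.exp

lemma aux_int_E : Integrable (fun t : ℝ => Real.exp (-t^2/2)) := by
  have := integrable_exp_neg_mul_sq (show (0:ℝ) < 1/2 by norm_num)
  exact this.congr (Filter.Eventually.of_forall fun t => by ring_nf)

lemma aux_int_tE : Integrable (fun t : ℝ => t * Real.exp (-t^2/2)) := by
  have := integrable_mul_exp_neg_mul_sq (show (0:ℝ) < 1/2 by norm_num)
  exact this.congr (Filter.Eventually.of_forall fun t => by ring_nf)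

lemma aux_int_t2E : Integrable (fun t : ℝ => t^2 * Real.exp (-t^2/2)) := by
  have := integrable_rpow_mul_exp_neg_mul_sq (s := ((2:ℕ):ℝ))
    (show (0:ℝ) < 1/2 by norm_num) (by norm_num)
  simp only [Real.rpow_natCast] at this
  exact this.congr (Filter.Eventually.of_forall fun t => by norm_num; left; ring)

lemma aux_integral_E : ∫ t : ℝ, Real.exp (-t^2/2) = Real.sqrt (2*π) := by
  have := integral_gaussian (1/2)
  rw [show π / (1/2) = 2*π by ring] at this
  rw [← this]
  congr 1; ext t; ring_nf

lemma aux_integral_tE : ∫ t : ℝ, t * Real.exp (-t^2/2) = 0 := by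
  have h := MeasureTheory.integral_neg_eq_self (fun t : ℝ => t * Real.exp (-t^2/2)) volume
  simp only [neg_neg, neg_sq] at h
  have h2 : ∫ t : ℝ, -t * Real.exp (-t^2/2) = ∫ t : ℝ, t * Real.exp (-t^2/2) := by
    simpa using h
  have h3 : ∫ t : ℝ, -t * Real.exp (-t^2/2) = -∫ t : ℝ, t * Real.exp (-t^2/2) := by
    rw [← integral_neg]; congr 1; ext t; ring
  linarith [h2.symm.trans h3]

lemma aux_tendsto_powE (k : ℕ) :
    Tendsto (fun t : ℝ => t^k * Real.exp (-t^2/2)) atTop (nhds 0) := by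
  have h := rpow_mul_exp_neg_mul_sq_isLittleO_exp_neg (show (0:ℝ) < 1/2 by norm_num) (k:ℝ)
  have hexp : Tendsto (fun x : ℝ => Real.exp (-(1/2) * x)) atTop (nhds 0) := by
    have h1 : Tendsto (fun x : ℝ => x/2) atTop atTop := tendsto_id.atTop_div_const (by norm_num)
    have := Real.tendsto_exp_neg_atTop_nhds_zero.comp h1
    refine this.congr fun x => ?_
    simp [Function.comp]; ring_nf
  have h2 := h.isBigO.trans_tendsto hexp
  refine h2.congr' ?_
  filter_upwards [eventually_gt_atTop (0:ℝ)] with t ht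
  rw [Real.rpow_natCast]; ring_nf

lemma aux_tendsto_tE_atBot :
    Tendsto (fun t : ℝ => t * Real.exp (-t^2/2)) atBot (nhds 0) := by
  have h := (aux_tendsto_powE 1).comp tendsto_neg_atBot_atTop
  simp only [Function.comp, pow_one, neg_sq] at h
  have : Tendsto (fun t : ℝ => -(t * Real.exp (-t^2/2))) atBot (nhds 0) := by
    refine h.congr fun t => ?_
    simp only [Function.comp_apply, neg_sq]; ring
  simpa using this.neg

lemma aux_integral_t2E : ∫ t : ℝ, t^2 * Real.exp (-t^2/2) = Real.sqrt (2*Real.pi) := by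
  set f' : ℝ → ℝ := fun t => t^2 * Real.exp (-t^2/2) - Real.exp (-t^2/2) with hf'
  set f : ℝ → ℝ := fun t => -t * Real.exp (-t^2/2) with hf
  have hderiv : ∀ t : ℝ, HasDerivAt f (f' t) t := by
    intro t
    have := ((hasDerivAt_id t).neg.mul (aux_exp_deriv t))
    refine this.congr_deriv ?_
    simp only [hf', hf, id, Pi.neg_apply]; ring
  have hint : Integrable f' := aux_int_t2E.sub aux_int_E
  have htop : Tendsto f atTop (nhds 0) := by
    have := (aux_tendsto_powE 1).neg
    simpa [hf] using this.congr fun t => by ring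
  have hbot : Tendsto f atBot (nhds 0) := by
    have := aux_tendsto_tE_atBot.neg
    simpa [hf] using this.congr fun t => by ring
  have h1 : ∫ t in Ioi (0:ℝ), f' t = 0 - f 0 :=
    integral_Ioi_of_hasDerivAt_of_tendsto (hderiv 0).continuousAt.continuousWithinAt
      (fun t _ => hderiv t) hint.integrableOn htop
  have h2 : ∫ t in Iic (0:ℝ), f' t = f 0 - 0 :=
    integral_Iic_of_hasDerivAt_of_tendsto (hderiv 0).continuousAt.continuousWithinAt
      (fun t _ => hderiv t) hint.integrableOn hbot
  have h3 : ∫ t : ℝ, f' t = 0 := by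
    rw [← intervalIntegral.integral_Iic_add_Ioi hint.integrableOn hint.integrableOn, h1, h2]; ring
  have h4 := integral_sub aux_int_t2E aux_int_E
  rw [show (fun t : ℝ => t^2 * Real.exp (-t^2/2) - Real.exp (-t^2/2)) = f' from rfl] at h4
  rw [h3, aux_integral_E] at h4
  linarith

lemma aux_tail {T : ℝ} (hT : 0 < T) :
    IntegrableOn (fun t : ℝ => (t-T)^2 * Real.exp (-t^2/2)) (Ioi T) ∧
    ∫ t in Ioi T, (t-T)^2 * Real.exp (-t^2/2) ≤ Real.exp (-T^2/2) / T := by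
  set B : ℝ → ℝ := fun t => ((t-T)^2+1) * t⁻¹ * Real.exp (-t^2/2) with hB
  set D : ℝ → ℝ := fun t =>
    ((t-T)^2 + 1 + ((t-T)^2+1) * (t^2)⁻¹ - 2*(t-T)*t⁻¹) * Real.exp (-t^2/2) with hD
  have hderiv : ∀ t ∈ Ici T, HasDerivAt (fun u => -(B u)) (D t) t := by
    intro t ht
    have ht0 : 0 < t := lt_of_lt_of_le hT ht
    have h1 : HasDerivAt (fun u : ℝ => (u-T)^2+1) (2*(t-T)) t := by
      have := (((hasDerivAt_id t).sub_const T).pow 2).add_const 1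
      refine this.congr_deriv ?_; norm_num
    have h2 : HasDerivAt (fun u : ℝ => u⁻¹) (-(t^2)⁻¹) t := hasDerivAt_inv (ne_of_gt ht0)
    have hmul := (h1.mul h2).mul (aux_exp_deriv t)
    have := hmul.neg
    refine this.congr_deriv ?_
    simp only [hD, Pi.mul_apply]
    field_simp
    ring
  have hbound : ∀ t ∈ Ioi T, (t-T)^2 * Real.exp (-t^2/2) ≤ D t := by
    intro t ht
    have ht0 : 0 < t := lt_trans hT ht
    have hcoef : (t-T)^2 ≤ (t-T)^2 + 1 + ((t-T)^2+1) * (t^2)⁻¹ - 2*(t-T)*t⁻¹ := by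
      have hkey : (t-T)^2 + 1 + ((t-T)^2+1) * (t^2)⁻¹ - 2*(t-T)*t⁻¹ - (t-T)^2
          = (T^2 + 1) / t^2 := by field_simp; ring
      nlinarith [sq_nonneg T, sq_nonneg t, div_pos (by positivity : (0:ℝ) < T^2+1) (by positivity : (0:ℝ) < t^2)]
    exact mul_le_mul_of_nonneg_right hcoef (Real.exp_pos _).le
  have hpos : ∀ t ∈ Ioi T, 0 ≤ D t := fun t ht =>
    le_trans (by positivity) (hbound t ht)
  have htends : Tendsto (fun t => -(B t)) atTop (nhds 0) := by
    have hBt : Tendsto B atTop (nhds 0) := by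
      have hg : Tendsto (fun t : ℝ => t^2 * Real.exp (-t^2/2) + Real.exp (-t^2/2))
          atTop (nhds 0) := by
        have h0 := aux_tendsto_powE 0
        simp only [pow_zero, one_mul] at h0
        simpa using (aux_tendsto_powE 2).add h0
      refine squeeze_zero' ?_ ?_ hg
      · filter_upwards [eventually_gt_atTop (0:ℝ)] with t ht
        have : (0:ℝ) < t⁻¹ := by positivity
        positivity
      · filter_upwards [eventually_ge_atTop (max T 1)] with t ht
        have ht1 : (1:ℝ) ≤ t := le_trans (le_max_right _ _) ht
        have htT : T ≤ t := le_trans (le_max_left _ _) ht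
        have h1 : ((t-T)^2+1) * t⁻¹ ≤ t^2 + 1 := by
          have hinv : t⁻¹ ≤ 1 := by
            rw [inv_le_one_iff₀]; right; exact ht1
          have hsq : (t-T)^2 ≤ t^2 := by nlinarith
          calc ((t-T)^2+1) * t⁻¹ ≤ ((t-T)^2+1) * 1 :=
                mul_le_mul_of_nonneg_left hinv (by positivity)
            _ ≤ t^2 + 1 := by nlinarith
        calc B t ≤ (t^2+1) * Real.exp (-t^2/2) :=
              mul_le_mul_of_nonneg_right h1 (Real.exp_pos _).le
          _ = t^2 * Real.exp (-t^2/2) + Real.exp (-t^2/2) := by ring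
    simpa using hBt.neg
  have hDint : IntegrableOn D (Ioi T) :=
    integrableOn_Ioi_deriv_of_nonneg' hderiv hpos htends
  have hDval : ∫ t in Ioi T, D t = 0 - (-(B T)) :=
    integral_Ioi_of_hasDerivAt_of_nonneg' hderiv hpos htends
  have hBT : B T = Real.exp (-T^2/2) / T := by
    simp only [hB, sub_self]; rw [show (0:ℝ)^2 = 0 by ring]; ring
  have hfint : IntegrableOn (fun t : ℝ => (t-T)^2 * Real.exp (-t^2/2)) (Ioi T) := by
    refine Integrable.mono' hDint ?_ ?_
    · exact (Continuous.aestronglyMeasurable (by continuity)).restrict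
    · rw [ae_restrict_iff' measurableSet_Ioi]
      refine Filter.Eventually.of_forall fun t ht => ?_
      rw [Real.norm_eq_abs, abs_of_nonneg (by positivity)]
      exact hbound t ht
  refine ⟨hfint, ?_⟩
  calc ∫ t in Ioi T, (t-T)^2 * Real.exp (-t^2/2) ≤ ∫ t in Ioi T, D t :=
        setIntegral_mono_on hfint hDint measurableSet_Ioi hbound
    _ = B T := by rw [hDval]; ring
    _ = Real.exp (-T^2/2) / T := hBT

lemma aux_int_shift (c : ℝ) : Integrable (fun t : ℝ => (t-c)^2 * Real.exp (-t^2/2)) := by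
  have h := (aux_int_t2E.sub (aux_int_tE.const_mul (2*c))).add (aux_int_E.const_mul (c^2))
  exact h.congr (Filter.Eventually.of_forall fun t => by simp only [Pi.add_apply, Pi.sub_apply]; ring)

lemma aux_soft_plus_int {T : ℝ} (hT : 0 < T) :
    Integrable (fun t : ℝ => (max (t - T) 0)^2 * Real.exp (-t^2/2)) := by
  refine Integrable.mono' (aux_int_shift T) ?_ ?_
  · exact Continuous.aestronglyMeasurable (by continuity)
  · refine Filter.Eventually.of_forall fun t => ?_
    rw [Real.norm_eq_abs, abs_of_nonneg (mul_nonneg (sq_nonneg _) (Real.exp_pos _).le)]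
    have h1 : (max (t - T) 0)^2 ≤ (t-T)^2 := by
      rcases le_total (t - T) 0 with h | h
      · rw [max_eq_right h]; simpa using sq_nonneg (t-T)
      · rw [max_eq_left h]
    exact mul_le_mul_of_nonneg_right h1 (Real.exp_pos _).le

lemma aux_soft_plus_val {T : ℝ} (hT : 0 < T) :
    ∫ t : ℝ, (max (t - T) 0)^2 * Real.exp (-t^2/2) ≤ Real.exp (-T^2/2) / T := by
  have hzero : ∀ t ∉ Ioi T, (max (t - T) 0)^2 * Real.exp (-t^2/2) = 0 := by
    intro t ht
    simp only [mem_Ioi, not_lt] at ht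
    rw [max_eq_right (by linarith)]; ring
  rw [← setIntegral_eq_integral_of_forall_compl_eq_zero hzero]
  have heq : ∫ t in Ioi T, (max (t - T) 0)^2 * Real.exp (-t^2/2)
      = ∫ t in Ioi T, (t - T)^2 * Real.exp (-t^2/2) := by
    refine setIntegral_congr_fun measurableSet_Ioi fun t ht => ?_
    rw [max_eq_left (by simp only [mem_Ioi] at ht; linarith)]
  rw [heq]
  exact (aux_tail hT).2

lemma aux_soft_int {T : ℝ} (hT : 0 < T) :
    Integrable (fun t : ℝ => (max (|t| - T) 0)^2 * Real.exp (-t^2/2)) ∧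
    ∫ t : ℝ, (max (|t| - T) 0)^2 * Real.exp (-t^2/2) ≤ 2 * (Real.exp (-T^2/2) / T) := by
  have hsplit : ∀ t : ℝ, (max (|t| - T) 0)^2 * Real.exp (-t^2/2)
      = (max (t - T) 0)^2 * Real.exp (-t^2/2)
        + (max (-t - T) 0)^2 * Real.exp (-t^2/2) := by
    intro t
    rcases le_total 0 t with h | h
    · rw [abs_of_nonneg h, max_eq_right (a := -t - T) (by linarith)]; ring
    · rw [abs_of_nonpos h, max_eq_right (a := t - T) (by linarith)]; ring
  have hneg : Integrable (fun t : ℝ => (max (-t - T) 0)^2 * Real.exp (-t^2/2)) := by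
    have := (aux_soft_plus_int hT).comp_neg
    exact this.congr (Filter.Eventually.of_forall fun t => by simp [neg_sq])
  have hint : Integrable (fun t : ℝ => (max (|t| - T) 0)^2 * Real.exp (-t^2/2)) := by
    have := (aux_soft_plus_int hT).add hneg
    exact this.congr (Filter.Eventually.of_forall fun t => (hsplit t).symm)
  refine ⟨hint, ?_⟩
  have hval : ∫ t : ℝ, (max (|t| - T) 0)^2 * Real.exp (-t^2/2)
      = (∫ t : ℝ, (max (t - T) 0)^2 * Real.exp (-t^2/2))
        + ∫ t : ℝ, (max (-t - T) 0)^2 * Real.exp (-t^2/2) := by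
    rw [← integral_add (aux_soft_plus_int hT) hneg]
    exact integral_congr_ae (Filter.Eventually.of_forall hsplit)
  have hnegval : ∫ t : ℝ, (max (-t - T) 0)^2 * Real.exp (-t^2/2)
      = ∫ t : ℝ, (max (t - T) 0)^2 * Real.exp (-t^2/2) := by
    have := MeasureTheory.integral_neg_eq_self
      (fun t : ℝ => (max (t - T) 0)^2 * Real.exp (-t^2/2)) volume
    rw [← this]
    congr 1; ext t; rw [neg_sq]
  rw [hval, hnegval]
  have := aux_soft_plus_val hT
  linarith

lemma aux_gauss_wd : gaussianReal 0 1
    = volume.withDensity (fun t => ENNReal.ofReal ((Real.sqrt (2*Real.pi))⁻¹ * Real.exp (-t^2/2))) := by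
  rw [gaussianReal_of_var_ne_zero 0 one_ne_zero]
  congr 1
  ext t
  rw [gaussianPDF_def, gaussianPDFReal_def]
  norm_num

lemma aux_pdf_meas : Measurable (fun t : ℝ =>
    ((Real.sqrt (2*Real.pi))⁻¹ * Real.exp (-t^2/2)).toNNReal) := by
  refine Measurable.real_toNNReal ?_
  exact (Continuous.measurable (by continuity))

lemma aux_gauss_integral (f : ℝ → ℝ) :
    ∫ t, f t ∂(gaussianReal 0 1)
      = (Real.sqrt (2*Real.pi))⁻¹ * ∫ t, Real.exp (-t^2/2) * f t := by
  rw [aux_gauss_wd]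
  rw [show (fun t : ℝ => ENNReal.ofReal ((Real.sqrt (2*Real.pi))⁻¹ * Real.exp (-t^2/2)))
      = (fun t : ℝ => (((Real.sqrt (2*Real.pi))⁻¹ * Real.exp (-t^2/2)).toNNReal : ℝ≥0∞)) from rfl]
  rw [integral_withDensity_eq_integral_smul aux_pdf_meas f]
  rw [← integral_const_mul]
  congr 1; ext t
  rw [NNReal.smul_def, Real.coe_toNNReal _ (by positivity), smul_eq_mul]
  ring

lemma aux_gauss_integrable_iff (f : ℝ → ℝ) :
    Integrable f (gaussianReal 0 1)
      ↔ Integrable (fun t => Real.exp (-t^2/2) * f t) volume := by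
  rw [aux_gauss_wd]
  rw [show (fun t : ℝ => ENNReal.ofReal ((Real.sqrt (2*Real.pi))⁻¹ * Real.exp (-t^2/2)))
      = (fun t : ℝ => (((Real.sqrt (2*Real.pi))⁻¹ * Real.exp (-t^2/2)).toNNReal : ℝ≥0∞)) from rfl]
  rw [integrable_withDensity_iff_integrable_smul aux_pdf_meas]
  have hc : (Real.sqrt (2*Real.pi))⁻¹ ≠ 0 := by positivity
  have heq : (fun t : ℝ => (((Real.sqrt (2*Real.pi))⁻¹ * Real.exp (-t^2/2)).toNNReal : ℝ≥0) • f t)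
      = (Real.sqrt (2*Real.pi))⁻¹ • (fun t => Real.exp (-t^2/2) * f t) := by
    ext t
    rw [Pi.smul_apply, NNReal.smul_def, Real.coe_toNNReal _ (by positivity), smul_eq_mul,
      smul_eq_mul]
    ring
  rw [heq, integrable_smul_iff hc]

lemma aux_gauss_moment (c : ℝ) :
    Integrable (fun t => (t - c)^2) (gaussianReal 0 1) ∧
    ∫ t, (t - c)^2 ∂(gaussianReal 0 1) = 1 + c^2 := by
  constructor
  · rw [aux_gauss_integrable_iff]
    exact (aux_int_shift c).congr (Filter.Eventually.of_forall fun t => by ring)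
  · rw [aux_gauss_integral]
    have h1 : (fun t : ℝ => Real.exp (-t^2/2) * (t - c)^2)
        = fun t : ℝ => (t^2 * Real.exp (-t^2/2) - 2*c * (t * Real.exp (-t^2/2)))
          + c^2 * Real.exp (-t^2/2) := by ext t; ring
    have hi1 : Integrable (fun t : ℝ => t^2 * Real.exp (-t^2/2)
        - 2*c * (t * Real.exp (-t^2/2))) := by
      have := aux_int_t2E.sub (aux_int_tE.const_mul (2*c))
      exact this.congr (Filter.Eventually.of_forall fun t => by
        simp only [Pi.sub_apply])
    rw [h1, integral_add hi1 (aux_int_E.const_mul (c^2)),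
      integral_sub aux_int_t2E (aux_int_tE.const_mul (2*c)),
      integral_const_mul, integral_const_mul, aux_integral_tE, aux_integral_t2E, aux_integral_E]
    have hs : Real.sqrt (2*Real.pi) ≠ 0 := by positivity
    field_simp
    ring
lemma aux_gauss_soft {T : ℝ} (hT : 0 < T) :
    Integrable (fun t => (max (|t| - T) 0)^2) (gaussianReal 0 1) ∧
    ∫ t, (max (|t| - T) 0)^2 ∂(gaussianReal 0 1)
      ≤ (Real.sqrt (2*Real.pi))⁻¹ * (2 * (Real.exp (-T^2/2) / T)) := by
  constructor
  · rw [aux_gauss_integrable_iff]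
    exact (aux_soft_int hT).1.congr (Filter.Eventually.of_forall fun t => by ring)
  · rw [aux_gauss_integral]
    have hle : ∫ t : ℝ, Real.exp (-t^2/2) * (max (|t| - T) 0)^2
        ≤ 2 * (Real.exp (-T^2/2) / T) := by
      have := (aux_soft_int hT).2
      have heq : ∫ t : ℝ, Real.exp (-t^2/2) * (max (|t| - T) 0)^2
          = ∫ t : ℝ, (max (|t| - T) 0)^2 * Real.exp (-t^2/2) := by
        congr 1; ext t; ring
      linarith [heq ▸ this]
    have hc : (0:ℝ) ≤ (Real.sqrt (2*Real.pi))⁻¹ := by positivity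
    exact mul_le_mul_of_nonneg_left hle hc

lemma aux_pi_map_eval {ι : Type*} [Fintype ι] [DecidableEq ι] {α : ι → Type*}
    [∀ i, MeasurableSpace (α i)] (μ : ∀ i, Measure (α i)) [∀ i, IsProbabilityMeasure (μ i)]
    (i : ι) : (Measure.pi μ).map (Function.eval i) = μ i := by
  ext s hs
  rw [Measure.map_apply (measurable_pi_apply i) hs, Set.eval_preimage, Measure.pi_pi]
  rw [Finset.prod_eq_single i]
  · simp
  · intro j _ hj
    simp [Function.update_of_ne hj]
  · intro h; exact absurd (Finset.mem_univ i) h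

lemma aux_eval_integrable {n : ℕ} (i : Fin n) (q : ℝ → ℝ)
    (hq : Integrable q (gaussianReal 0 1)) :
    Integrable (fun gv : Fin n → ℝ => q (gv i)) (Measure.pi fun _ => gaussianReal 0 1) := by
  have hmap := aux_pi_map_eval (fun _ : Fin n => gaussianReal 0 1) i
  rw [← hmap] at hq
  exact (integrable_map_measure hq.aestronglyMeasurable
    (measurable_pi_apply i).aemeasurable).mp hq

lemma aux_eval_integral {n : ℕ} (i : Fin n) (q : ℝ → ℝ)
    (hq : AEStronglyMeasurable q (gaussianReal 0 1)) :
    ∫ gv : Fin n → ℝ, q (gv i) ∂(Measure.pi fun _ => gaussianReal 0 1)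
      = ∫ t, q t ∂(gaussianReal 0 1) := by
  have hmap := aux_pi_map_eval (fun _ : Fin n => gaussianReal 0 1) i
  rw [← hmap] at hq
  conv_rhs => rw [← hmap]
  rw [integral_map (measurable_pi_apply i).aemeasurable hq]

lemma aux_clamp_bound {c T t : ℝ} (hT : 0 < T) (hc : T ≤ c) :
    (t - c * max (min (t/c) 1) (-1))^2 ≤ (max (|t| - T) 0)^2 := by
  have hc0 : 0 < c := lt_of_lt_of_le hT hc
  rcases le_total t (-c) with h | h
  · have h1 : t / c ≤ -1 := by rw [div_le_iff₀ hc0]; linarith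
    rw [min_eq_left (le_trans h1 (by norm_num)), max_eq_right h1]
    have habs : |t| = -t := abs_of_nonpos (by linarith)
    rw [habs, max_eq_left (by linarith)]
    nlinarith
  · rcases le_total c t with h2 | h2
    · have h1 : (1:ℝ) ≤ t / c := by rw [le_div_iff₀ hc0]; linarith
      rw [min_eq_right h1, max_eq_left (by norm_num)]
      have habs : |t| = t := abs_of_nonneg (by linarith)
      rw [habs, max_eq_left (by linarith)]
      nlinarith
    · have h1 : t / c ≤ 1 := by rw [div_le_one hc0]; exact h2
      have h1' : (-1:ℝ) ≤ t / c := by rw [le_div_iff₀ hc0]; linarith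
      rw [min_eq_left h1, max_eq_left h1', mul_div_cancel₀ _ (ne_of_gt hc0)]
      nlinarith [sq_nonneg (max (|t| - T) 0)]

end AuxStmt12

open MeasureTheory ProbabilityTheory Pointwise in
theorem stmt_12 (n J : ℕ) (hn : 0 < n)
    (x : EuclideanSpace ℝ (Fin n)) (z : Fin (J + 1) → EuclideanSpace ℝ (Fin n))
    (hz0 : z 0 = 0) (ε : ℝ) (hε : 0 < ε)
    (η : Fin (J + 1) → ℝ)
    (hη : ∀ j, η j = n * (∑ l, (|x l - z j l| + ε)⁻¹)⁻¹)
    (w : Fin (J + 1) → Fin n → ℝ)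
    (hw : ∀ j i, w j i = η j / (|x i - z j i| + ε))
    (β : Fin (J + 1) → ℝ) (hβ : ∀ j, 0 ≤ β j) (hβ1 : ∑ j, β j = 1)
    (s : Fin (J + 1) → ℕ)
    (hs : ∀ j, s j = (Finset.univ.filter fun i => x i ≠ z j i).card)
    (sbar : ℝ) (hsbar : sbar = ∑ j, β j * s j)
    (ηhat : ℝ) (hηhat : ηhat = Finset.univ.inf' Finset.univ_nonempty η)
    (α : ℝ)
    (hα : α = ε ^ 2 / ηhat ^ 2 *
      ∑ j, β j * ∑ i ∈ Finset.univ.filter fun i => x i ≠ z j i, w j i ^ 2)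
    (hsbar_pos : 0 < sbar) (hsbar_lt : sbar < n)
    (g : EuclideanSpace ℝ (Fin n) → ℝ)
    (hg : ∀ x', g x' = ∑ j, β j * ∑ i, w j i * |x' i - z j i|)
    (subdiff : Set (EuclideanSpace ℝ (Fin n)))
    (hsub : subdiff =
      {u : EuclideanSpace ℝ (Fin n) | ∀ y, g y ≥ g x + ∑ i, u i * (y i - x i)}) :
    (⨅ τ : {t : ℝ // 0 ≤ t},
        ∫ gv : Fin n → ℝ,
          Metric.infDist ((EuclideanSpace.equiv (Fin n) ℝ).symm gv) ((τ : ℝ) • subdiff) ^ 2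
          ∂(Measure.pi fun _ => gaussianReal 0 1)) ≤
      sbar + 2 * α * Real.log (n / sbar) +
        sbar * (1 - sbar / n) / Real.sqrt (Real.pi * Real.log (n / sbar)) := by
  classical
  have hn' : (0:ℝ) < n := Nat.cast_pos.mpr hn
  have hne : Nonempty (Fin n) := ⟨⟨0, hn⟩⟩
  have hηpos : ∀ j, 0 < η j := by
    intro j; rw [hη j]
    have hsum : 0 < ∑ l, (|x l - z j l| + ε)⁻¹ :=
      Finset.sum_pos (fun l _ => by positivity) Finset.univ_nonempty
    positivity
  have hηhat_pos : 0 < ηhat := by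
    rw [hηhat, Finset.lt_inf'_iff]
    exact fun j _ => hηpos j
  have hηhat_le : ∀ j, ηhat ≤ η j := fun j => hηhat ▸ Finset.inf'_le _ (Finset.mem_univ j)
  have hwpos : ∀ j i, 0 < w j i := fun j i => by
    rw [hw]; exact div_pos (hηpos j) (by positivity)
  set L := Real.log (n / sbar) with hLdef
  have hL : 0 < L := Real.log_pos ((one_lt_div hsbar_pos).mpr hsbar_lt)
  set T := Real.sqrt (2*L) with hTdef
  have hT : 0 < T := Real.sqrt_pos.mpr (by linarith)
  have hT2 : T^2 = 2*L := Real.sq_sqrt (by linarith)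
  set τ₀ := ε / ηhat * T with hτdef
  have hτ₀ : 0 < τ₀ := mul_pos (div_pos hε hηhat_pos) hT
  -- subgradient choice
  set σf : Fin (J+1) → Fin n → ℝ := fun j i => if 0 < x i - z j i then 1 else -1 with hσf
  set vf : Fin (J+1) → Fin n → ℝ → ℝ := fun j i t =>
    if x i ≠ z j i then σf j i else max (min (t / (τ₀ * w j i)) 1) (-1) with hvf
  have hv_abs : ∀ j i t, |vf j i t| ≤ 1 := by
    intro j i t; rw [hvf]; dsimp only
    split_ifs with h
    · rw [hσf]; dsimp only; split_ifs <;> norm_num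
    · rw [abs_le]
      exact ⟨le_max_right _ _, max_le (min_le_right _ _) (by norm_num)⟩
  have hv_mul : ∀ j i t, vf j i t * (x i - z j i) = |x i - z j i| := by
    intro j i t; rw [hvf]; dsimp only
    split_ifs with h
    · rw [hσf]; dsimp only; split_ifs with h2
      · rw [abs_of_pos h2]; ring
      · have hlt : x i - z j i < 0 :=
          lt_of_le_of_ne (not_lt.mp h2) (sub_ne_zero.mpr h)
        rw [abs_of_neg hlt]; ring
    · push_neg at h; rw [h]; simp
  have hTle : ∀ j i, x i = z j i → T ≤ τ₀ * w j i := by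
    intro j i hxz
    rw [hw j i, hxz, sub_self, abs_zero, zero_add, hτdef]
    have h1 : 1 ≤ η j / ηhat := (one_le_div hηhat_pos).mpr (hηhat_le j)
    have h2 : ε / ηhat * T * (η j / ε) = T * (η j / ηhat) := by field_simp
    rw [h2]
    nlinarith [hT.le]
  set U : (Fin n → ℝ) → EuclideanSpace ℝ (Fin n) := fun gv =>
    (EuclideanSpace.equiv (Fin n) ℝ).symm (fun i => ∑ j, β j * (w j i * vf j i (gv i)))
    with hUdef
  have hUa : ∀ gv i, U gv i = ∑ j, β j * (w j i * vf j i (gv i)) := fun gv i => rfl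
  have hU : ∀ gv, U gv ∈ subdiff := by
    intro gv
    rw [hsub]
    intro y
    rw [hg y, hg x, ge_iff_le]
    have hre : ∑ i, U gv i * (y i - x i)
        = ∑ j, β j * ∑ i, w j i * vf j i (gv i) * (y i - x i) := by
      simp_rw [hUa, Finset.sum_mul, Finset.mul_sum]
      rw [Finset.sum_comm]
      exact Finset.sum_congr rfl fun j _ => Finset.sum_congr rfl fun i _ => by ring
    rw [hre, ← Finset.sum_add_distrib]
    refine Finset.sum_le_sum fun j _ => ?_
    rw [← mul_add]
    refine mul_le_mul_of_nonneg_left ?_ (hβ j)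
    rw [← Finset.sum_add_distrib]
    refine Finset.sum_le_sum fun i _ => ?_
    have h1 : vf j i (gv i) * (y i - x i)
        = vf j i (gv i) * (y i - z j i) - |x i - z j i| := by
      rw [← hv_mul j i (gv i)]; ring
    have h2 : vf j i (gv i) * (y i - z j i) ≤ |y i - z j i| := by
      calc vf j i (gv i) * (y i - z j i) ≤ |vf j i (gv i) * (y i - z j i)| := le_abs_self _
        _ = |vf j i (gv i)| * |y i - z j i| := abs_mul _ _
        _ ≤ 1 * |y i - z j i| :=
            mul_le_mul_of_nonneg_right (hv_abs j i (gv i)) (abs_nonneg _)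
        _ = |y i - z j i| := one_mul _
    have hkey : |x i - z j i| + vf j i (gv i) * (y i - x i) ≤ |y i - z j i| := by
      rw [h1]; linarith
    calc w j i * |x i - z j i| + w j i * vf j i (gv i) * (y i - x i)
        = w j i * (|x i - z j i| + vf j i (gv i) * (y i - x i)) := by ring
      _ ≤ w j i * |y i - z j i| := mul_le_mul_of_nonneg_left hkey (hwpos j i).le
  -- majorant
  set Q : Fin (J+1) → Fin n → ℝ → ℝ := fun j i t =>
    if x i ≠ z j i then (t - τ₀ * (w j i * σf j i))^2 else (max (|t| - T) 0)^2 with hQdef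
  have hpoint : ∀ gv : Fin n → ℝ,
      Metric.infDist ((EuclideanSpace.equiv (Fin n) ℝ).symm gv) (τ₀ • subdiff) ^ 2
        ≤ ∑ i, ∑ j, β j * Q j i (gv i) := by
    intro gv
    have hmem : τ₀ • U gv ∈ τ₀ • subdiff := Set.smul_mem_smul_set (hU gv)
    have h1 : Metric.infDist ((EuclideanSpace.equiv (Fin n) ℝ).symm gv) (τ₀ • subdiff)
        ≤ dist ((EuclideanSpace.equiv (Fin n) ℝ).symm gv) (τ₀ • U gv) :=
      Metric.infDist_le_dist_of_mem hmem
    have h2 : Metric.infDist ((EuclideanSpace.equiv (Fin n) ℝ).symm gv) (τ₀ • subdiff) ^ 2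
        ≤ dist ((EuclideanSpace.equiv (Fin n) ℝ).symm gv) (τ₀ • U gv) ^ 2 :=
      pow_le_pow_left₀ Metric.infDist_nonneg h1 2
    refine le_trans h2 ?_
    rw [EuclideanSpace.dist_eq, Real.sq_sqrt (Finset.sum_nonneg fun i _ => sq_nonneg _)]
    refine Finset.sum_le_sum fun i _ => ?_
    have hcoord : dist (((EuclideanSpace.equiv (Fin n) ℝ).symm gv) i) ((τ₀ • U gv) i) ^ 2
        = (∑ j, β j * (gv i - τ₀ * (w j i * vf j i (gv i))))^2 := by
      have hs1 : ((EuclideanSpace.equiv (Fin n) ℝ).symm gv) i = gv i := rfl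
      have hs2 : (τ₀ • U gv) i = τ₀ * U gv i := rfl
      have hsum : ∑ j, β j * (gv i - τ₀ * (w j i * vf j i (gv i)))
          = gv i - τ₀ * ∑ j, β j * (w j i * vf j i (gv i)) := by
        simp_rw [mul_sub]
        rw [Finset.sum_sub_distrib, ← Finset.sum_mul, hβ1, one_mul, Finset.mul_sum]
        congr 1
        exact Finset.sum_congr rfl fun j _ => by ring
      rw [hs1, hs2, hUa, Real.dist_eq, sq_abs, hsum]
    rw [hcoord]
    have hJen : (∑ j, β j * (gv i - τ₀ * (w j i * vf j i (gv i))))^2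
        ≤ ∑ j, β j * (gv i - τ₀ * (w j i * vf j i (gv i)))^2 := by
      have hcs := Finset.sum_mul_sq_le_sq_mul_sq Finset.univ (fun j => Real.sqrt (β j))
        (fun j => Real.sqrt (β j) * (gv i - τ₀ * (w j i * vf j i (gv i))))
      have e1 : ∑ j, Real.sqrt (β j) * (Real.sqrt (β j) * (gv i - τ₀ * (w j i * vf j i (gv i))))
          = ∑ j, β j * (gv i - τ₀ * (w j i * vf j i (gv i))) :=
        Finset.sum_congr rfl fun j _ => by
          rw [← mul_assoc, Real.mul_self_sqrt (hβ j)]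
      have e2 : ∑ j, Real.sqrt (β j) ^ 2 = (1:ℝ) := by
        rw [← hβ1]; exact Finset.sum_congr rfl fun j _ => Real.sq_sqrt (hβ j)
      have e3 : ∑ j, (Real.sqrt (β j) * (gv i - τ₀ * (w j i * vf j i (gv i))))^2
          = ∑ j, β j * (gv i - τ₀ * (w j i * vf j i (gv i)))^2 :=
        Finset.sum_congr rfl fun j _ => by
          rw [mul_pow, Real.sq_sqrt (hβ j)]
      rw [e1, e2, e3, one_mul] at hcs
      exact hcs
    refine le_trans hJen (Finset.sum_le_sum fun j _ => ?_)
    refine mul_le_mul_of_nonneg_left ?_ (hβ j)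
    rw [hvf, hQdef]; dsimp only
    split_ifs with h
    · exact le_rfl
    · push_neg at h
      have hc := hTle j i h
      have := aux_clamp_bound hT hc (t := gv i)
      calc (gv i - τ₀ * (w j i * max (min (gv i / (τ₀ * w j i)) 1) (-1)))^2
          = (gv i - (τ₀ * w j i) * max (min (gv i / (τ₀ * w j i)) 1) (-1))^2 := by ring_nf
        _ ≤ (max (|gv i| - T) 0)^2 := this
  -- integral of Q
  have hσ2 : ∀ j i, σf j i ^ 2 = 1 := by
    intro j i; rw [hσf]; dsimp only; split_ifs <;> norm_num
  have hQint : ∀ j i, Integrable (Q j i) (gaussianReal 0 1) := by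
    intro j i; rw [hQdef]; dsimp only; split_ifs with h
    · exact (aux_gauss_moment (τ₀ * (w j i * σf j i))).1
    · exact (aux_gauss_soft hT).1
  set Bd := (Real.sqrt (2*Real.pi))⁻¹ * (2 * (Real.exp (-T^2/2) / T)) with hBd
  have hBd0 : 0 ≤ Bd := by positivity
  have hQon : ∀ j i, x i ≠ z j i →
      ∫ t, Q j i t ∂(gaussianReal 0 1) = 1 + τ₀^2 * w j i^2 := by
    intro j i h
    have hQ : Q j i = fun t => (t - τ₀ * (w j i * σf j i))^2 := by
      funext t; rw [hQdef]; dsimp only; rw [if_pos h]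
    rw [hQ, (aux_gauss_moment _).2]
    have : (τ₀ * (w j i * σf j i))^2 = τ₀^2 * w j i^2 := by
      linear_combination τ₀^2 * w j i^2 * hσ2 j i
    rw [this]
  have hQoff : ∀ j i, ¬(x i ≠ z j i) → ∫ t, Q j i t ∂(gaussianReal 0 1) ≤ Bd := by
    intro j i h
    have hQ : Q j i = fun t => (max (|t| - T) 0)^2 := by
      funext t; rw [hQdef]; dsimp only; rw [if_neg h]
    rw [hQ, hBd]
    exact (aux_gauss_soft hT).2
  -- infimum step
  have hbdd : BddBelow (Set.range fun τ : {t : ℝ // 0 ≤ t} =>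
      ∫ gv : Fin n → ℝ, Metric.infDist ((EuclideanSpace.equiv (Fin n) ℝ).symm gv)
        ((τ : ℝ) • subdiff) ^ 2 ∂(Measure.pi fun _ => gaussianReal 0 1)) := by
    refine ⟨0, ?_⟩
    rintro r ⟨τ, rfl⟩
    exact integral_nonneg fun gv => sq_nonneg _
  refine le_trans (ciInf_le hbdd ⟨τ₀, hτ₀.le⟩) ?_
  have hFint : Integrable (fun gv : Fin n → ℝ => ∑ i, ∑ j, β j * Q j i (gv i))
      (Measure.pi fun _ => gaussianReal 0 1) :=
    integrable_finset_sum _ fun i _ => integrable_finset_sum _ fun j _ =>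
      (aux_eval_integrable i (Q j i) (hQint j i)).const_mul (β j)
  refine le_trans (integral_mono_of_nonneg
    (Filter.Eventually.of_forall fun gv => sq_nonneg _) hFint
    (Filter.Eventually.of_forall hpoint)) ?_
  have hIeq : ∫ gv : Fin n → ℝ, (∑ i, ∑ j, β j * Q j i (gv i))
      ∂(Measure.pi fun _ => gaussianReal 0 1)
      = ∑ i : Fin n, ∑ j, β j * ∫ t, Q j i t ∂(gaussianReal 0 1) := by
    rw [integral_finset_sum _ fun i _ => integrable_finset_sum _ fun j _ =>
      (aux_eval_integrable i (Q j i) (hQint j i)).const_mul (β j)]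
    refine Finset.sum_congr rfl fun i _ => ?_
    rw [integral_finset_sum _ fun j _ =>
      (aux_eval_integrable i (Q j i) (hQint j i)).const_mul (β j)]
    refine Finset.sum_congr rfl fun j _ => ?_
    rw [integral_const_mul, aux_eval_integral i (Q j i) (hQint j i).aestronglyMeasurable]
  rw [hIeq]
  -- cardinalities
  have hsle : ∀ j, s j ≤ n := by
    intro j; rw [hs j]
    calc (Finset.univ.filter fun i => x i ≠ z j i).card ≤ Finset.univ.card :=
          Finset.card_filter_le _ _
      _ = n := by simp
  have hcardR : ∀ j, (((Finset.univ.filter fun i : Fin n => ¬ x i ≠ z j i).card) : ℝ)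
      = (n:ℝ) - s j := by
    intro j
    have h1 : (Finset.univ.filter fun i : Fin n => x i ≠ z j i).card
        + (Finset.univ.filter fun i : Fin n => ¬ x i ≠ z j i).card = n := by
      rw [Finset.card_filter_add_card_filter_not]; simp
    have h2 : (Finset.univ.filter fun i : Fin n => ¬ x i ≠ z j i).card = n - s j := by
      rw [hs j]; omega
    rw [h2, Nat.cast_sub (hsle j)]
  -- summation bound
  have hsum2 : ∑ i : Fin n, ∑ j, β j * ∫ t, Q j i t ∂(gaussianReal 0 1)
      ≤ ∑ j, β j * ((s j : ℝ)
          + τ₀^2 * (∑ i ∈ Finset.univ.filter fun i => x i ≠ z j i, w j i^2)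
          + ((n:ℝ) - s j) * Bd) := by
    rw [Finset.sum_comm]
    refine Finset.sum_le_sum fun j _ => ?_
    rw [← Finset.mul_sum]
    refine mul_le_mul_of_nonneg_left ?_ (hβ j)
    rw [← Finset.sum_filter_add_sum_filter_not Finset.univ (fun i => x i ≠ z j i)]
    have hA : ∑ i ∈ Finset.univ.filter (fun i => x i ≠ z j i),
          ∫ t, Q j i t ∂(gaussianReal 0 1)
        = (s j : ℝ) + τ₀^2 * ∑ i ∈ Finset.univ.filter (fun i => x i ≠ z j i), w j i ^2 := by
      rw [Finset.sum_congr rfl (fun i hi => hQon j i (Finset.mem_filter.mp hi).2)]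
      rw [Finset.sum_add_distrib, Finset.sum_const, ← Finset.mul_sum, hs j]
      simp [nsmul_eq_mul]
    have hB : ∑ i ∈ Finset.univ.filter (fun i => ¬ x i ≠ z j i),
          ∫ t, Q j i t ∂(gaussianReal 0 1) ≤ ((n:ℝ) - s j) * Bd := by
      calc ∑ i ∈ Finset.univ.filter (fun i => ¬ x i ≠ z j i),
            ∫ t, Q j i t ∂(gaussianReal 0 1)
          ≤ ∑ _i ∈ Finset.univ.filter (fun i => ¬ x i ≠ z j i), Bd :=
            Finset.sum_le_sum fun i hi => hQoff j i (Finset.mem_filter.mp hi).2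
        _ = (((Finset.univ.filter fun i : Fin n => ¬ x i ≠ z j i).card) : ℝ) * Bd := by
            rw [Finset.sum_const, nsmul_eq_mul]
        _ = ((n:ℝ) - s j) * Bd := by rw [hcardR j]
    linarith [hA, hB]
  refine le_trans hsum2 ?_
  -- final algebra
  have e1 : ∑ j, β j * (s j : ℝ) = sbar := hsbar.symm
  have e2 : ∑ j, β j * (τ₀^2 * (∑ i ∈ Finset.univ.filter fun i => x i ≠ z j i, w j i^2))
      = τ₀^2 * ∑ j, β j * (∑ i ∈ Finset.univ.filter fun i => x i ≠ z j i, w j i^2) := by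
    rw [Finset.mul_sum]
    exact Finset.sum_congr rfl fun j _ => by ring
  have e3 : ∑ j, β j * (((n:ℝ) - s j) * Bd) = ((n:ℝ) - sbar) * Bd := by
    have h1 : ∑ j, β j * (((n:ℝ) - s j) * Bd)
        = ∑ j, (β j * (n:ℝ) - β j * s j) * Bd :=
      Finset.sum_congr rfl fun j _ => by ring
    rw [h1, ← Finset.sum_mul, Finset.sum_sub_distrib, ← Finset.sum_mul, hβ1, one_mul, ← hsbar]
  have hτsq : τ₀^2 = ε^2/ηhat^2 * (2*L) := by
    rw [hτdef, mul_pow, div_pow, hT2]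
  have e4 : τ₀^2 * (∑ j, β j * (∑ i ∈ Finset.univ.filter fun i => x i ≠ z j i, w j i^2))
      = 2*α*L := by
    rw [hτsq, hα]; ring
  have hexpT : Real.exp (-T^2/2) = sbar / n := by
    rw [hT2, show -(2*L)/2 = -L by ring, Real.exp_neg, hLdef,
      Real.exp_log (div_pos hn' hsbar_pos), inv_div]
  have hsqrt : Real.sqrt (2*Real.pi) * Real.sqrt (2*L) = 2 * Real.sqrt (Real.pi*L) := by
    rw [← Real.sqrt_mul (by positivity), show 2*Real.pi*(2*L) = 4*(Real.pi*L) by ring,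
      Real.sqrt_mul (by norm_num : (0:ℝ) ≤ 4),
      show Real.sqrt 4 = 2 by
        rw [show (4:ℝ) = 2^2 by norm_num, Real.sqrt_sq (by norm_num : (0:ℝ) ≤ 2)]]
  have e5 : ((n:ℝ) - sbar) * Bd = sbar * (1 - sbar/n) / Real.sqrt (Real.pi * L) := by
    have h2π : (0:ℝ) < Real.sqrt (2*Real.pi) := by positivity
    have h2L : (0:ℝ) < Real.sqrt (2*L) := Real.sqrt_pos.mpr (by linarith)
    have hπL : (0:ℝ) < Real.sqrt (Real.pi*L) := Real.sqrt_pos.mpr (by positivity)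
    rw [hBd, hexpT, hTdef]
    rw [show Real.sqrt (2*L) = Real.sqrt (2*Real.pi) * Real.sqrt (2*L) / Real.sqrt (2*Real.pi)
      by field_simp]
    rw [hsqrt]
    field_simp
  have hfinal : ∑ j, β j * ((s j : ℝ)
        + τ₀^2 * (∑ i ∈ Finset.univ.filter fun i => x i ≠ z j i, w j i^2)
        + ((n:ℝ) - s j) * Bd)
      = sbar + 2*α*L + sbar * (1 - sbar/n) / Real.sqrt (Real.pi * L) := by
    have hd : ∑ j, β j * ((s j : ℝ)
          + τ₀^2 * (∑ i ∈ Finset.univ.filter fun i => x i ≠ z j i, w j i^2)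
          + ((n:ℝ) - s j) * Bd)
        = (∑ j, β j * (s j : ℝ))
          + (∑ j, β j * (τ₀^2 * (∑ i ∈ Finset.univ.filter fun i => x i ≠ z j i, w j i^2)))
          + ∑ j, β j * (((n:ℝ) - s j) * Bd) := by
      simp_rw [mul_add]
      rw [Finset.sum_add_distrib, Finset.sum_add_distrib]
    rw [hd, e1, e2, e3, e4, e5]
  rw [hfinal]
end
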